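/- If an operation 𝓘 measures a sharp effect a (a projection), then 𝓘*(b) commutes with a for every effect b. -/

import Mathlib

open scoped ComplexOrder

open Matrix BigOperators

/-- An effect on a finite-dimensional Hilbert space: `0 ≤ a ≤ I`. -/
def IsEffect {n : ℕ} (a : Matrix (Fin n) (Fin n) ℂ) : Prop :=
  a.PosSemidef ∧ (1 - a).PosSemidef

/-- The dual of the operation with Kraus operators `K i`. -/
noncomputable def KrausDual {n m : ℕ} (K : Fin m → Matrix (Fin n) (Fin n) ℂ)
    (A : Matrix (Fin n) (Fin n) ℂ) : Matrix (Fin n) (Fin n) ℂ :=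
  ∑ i, (K i)ᴴ * A * K i

/-- A matrix that is PSD and whose negation is PSD is zero. -/
lemma psd_neg_psd_eq_zero {n : ℕ} {M : Matrix (Fin n) (Fin n) ℂ}
    (h1 : M.PosSemidef) (h2 : (-M).PosSemidef) : M = 0 := by
  have hv : ∀ x : Fin n → ℂ, M *ᵥ x = 0 := by
    intro x
    rw [← h1.dotProduct_mulVec_zero_iff]
    have a1 := h1.dotProduct_mulVec_nonneg x
    have a2 := h2.dotProduct_mulVec_nonneg x
    rw [neg_mulVec, dotProduct_neg, le_neg, neg_zero] at a2
    exact le_antisymm a2 a1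
  ext i j
  have := congrFun (hv (Pi.single j 1)) i
  simpa [mulVec_single] using this

/-- A finite sum of PSD matrices that is zero has all terms zero. -/
lemma psd_sum_eq_zero {n m : ℕ} {M : Fin m → Matrix (Fin n) (Fin n) ℂ}
    (hpsd : ∀ i, (M i).PosSemidef) (hsum : ∑ i, M i = 0) (i : Fin m) : M i = 0 := by
  apply psd_neg_psd_eq_zero (hpsd i)
  have : -M i = ∑ j ∈ Finset.univ.erase i, M j := by
    have h := Finset.add_sum_erase Finset.univ M (Finset.mem_univ i)
    rw [hsum] at h
    exact neg_eq_of_add_eq_zero_right h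
  rw [this]
  exact Finset.sum_induction _ _ (fun a b ha hb => ha.add hb) Matrix.PosSemidef.zero
    (fun j _ => hpsd j)

/-- if an operation (Kraus operators `K`, `∑ Kᵢ*Kᵢ ≤ I`) measures a
sharp effect `a` (a projection), then `𝓘*(b)` commutes with `a` for every effect `b`. -/
theorem dual_commutes_of_measures_sharp {n m : ℕ}
    (K : Fin m → Matrix (Fin n) (Fin n) ℂ)
    (hK : (1 - ∑ i, (K i)ᴴ * K i).PosSemidef)
    (a : Matrix (Fin n) (Fin n) ℂ) (ha : IsEffect a) (hsharp : a * a = a)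
    (hmeas : KrausDual K 1 = a) :
    ∀ b : Matrix (Fin n) (Fin n) ℂ, IsEffect b →
      KrausDual K b * a = a * KrausDual K b := by
  have haH : aᴴ = a := ha.1.1
  have hsum : ∑ i, (K i)ᴴ * K i = a := by
    simpa [KrausDual, mul_one] using hmeas
  -- each K i * (1 - a) = 0
  have hkey : ∀ i, K i * (1 - a) = 0 := by
    have hzero : ∑ i, (K i * (1 - a))ᴴ * (K i * (1 - a)) = 0 := by
      have : ∑ i, (K i * (1 - a))ᴴ * (K i * (1 - a))
          = (1 - a) * (∑ i, (K i)ᴴ * K i) * (1 - a) := by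
        rw [Finset.mul_sum, Finset.sum_mul]
        refine Finset.sum_congr rfl fun i _ => ?_
        simp only [conjTranspose_mul, conjTranspose_sub, conjTranspose_one, haH]
        noncomm_ring
      rw [this, hsum]
      have h1a : (1 - a) * a = 0 := by
        rw [sub_mul, one_mul, hsharp, sub_self]
      rw [h1a, zero_mul]
    intro i
    have := psd_sum_eq_zero (fun i => posSemidef_conjTranspose_mul_self (K i * (1 - a)))
      hzero i
    exact Matrix.conjTranspose_mul_self_eq_zero.mp this
  have hKa : ∀ i, K i * a = K i := by
    intro i
    have := hkey i
    rw [mul_sub, mul_one, sub_eq_zero] at this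
    exact this.symm
  have haK : ∀ i, a * (K i)ᴴ = (K i)ᴴ := by
    intro i
    have := congrArg conjTranspose (hKa i)
    rwa [conjTranspose_mul, haH] at this
  intro b _
  unfold KrausDual
  rw [Finset.sum_mul, Finset.mul_sum]
  refine Finset.sum_congr rfl fun i _ => ?_
  rw [mul_assoc ((K i)ᴴ * b), hKa i, ← mul_assoc, ← mul_assoc, haK i]
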